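/- Let M be a sparse paving matroid of rank r on a ground set E of size m, let e, f ∈ E be distinct, and let B_{ef} and B_{e¬f} denote the sets of bases containing both e and f, and containing e but not f, respectively. Then (m − r − 1)·|B_{ef}| ≤ (r − 1)·|B_{e¬f}|. -/

import Mathlib

open scoped symmDiff

variable {α : Type*} [DecidableEq α]

/-- `B` is the collection of bases of a matroid of rank `r` on ground set `E`. -/
def MatroidBases (E : Finset α) (r : ℕ) (B : Finset (Finset α)) : Prop :=
  B.Nonempty ∧ (∀ X ∈ B, X ⊆ E ∧ X.card = r) ∧
    ∀ X ∈ B, ∀ Y ∈ B, ∀ e ∈ X, ∃ f ∈ Y, insert f (X.erase e) ∈ B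

/-- A set is independent if it is contained in some basis. -/
def Indep (B : Finset (Finset α)) (X : Finset α) : Prop := ∃ Y ∈ B, X ⊆ Y

/-- A circuit is a minimal dependent subset of the ground set. -/
def Circuit (E : Finset α) (B : Finset (Finset α)) (C : Finset α) : Prop :=
  C ⊆ E ∧ ¬ Indep B C ∧ ∀ x ∈ C, Indep B (C.erase x)

/-- A paving matroid of rank `r`: every `(r-1)`-element subset of the ground set is independent. -/
def IsPaving (E : Finset α) (r : ℕ) (B : Finset (Finset α)) : Prop :=
  MatroidBases E r B ∧ ∀ X ⊆ E, X.card = r - 1 → Indep B X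

/-- A sparse paving matroid: a paving matroid in which any two distinct circuits of size `r`
have symmetric difference of size greater than 2. -/
def IsSparsePaving (E : Finset α) (r : ℕ) (B : Finset (Finset α)) : Prop :=
  IsPaving E r B ∧ ∀ C C' : Finset α, Circuit E B C → Circuit E B C' → C.card = r →
    C'.card = r → C ≠ C' → 2 < (C ∆ C').card

/-- An independent set of size `r` is a basis. -/
lemma indep_mem {E : Finset α} {r : ℕ} {B : Finset (Finset α)}
    (hM : MatroidBases E r B) {S : Finset α} (hS : Indep B S) (hcard : S.card = r) : S ∈ B := by
  obtain ⟨Y, hY, hSY⟩ := hS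
  have hYr := (hM.2.1 Y hY).2
  have : S = Y := Finset.eq_of_subset_of_card_le hSY (by omega)
  rwa [this]

/-- A dependent `r`-set in a paving matroid is a circuit. -/
lemma dep_circuit {E : Finset α} {r : ℕ} {B : Finset (Finset α)}
    (hP : IsPaving E r B) {S : Finset α} (hSE : S ⊆ E) (hcard : S.card = r)
    (hdep : S ∉ B) : Circuit E B S := by
  refine ⟨hSE, fun hind => hdep (indep_mem hP.1 hind hcard), fun x hx => ?_⟩
  refine hP.2 (S.erase x) ((Finset.erase_subset x S).trans hSE) ?_
  rw [Finset.card_erase_of_mem hx, hcard]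

/-- At most one extension of an `(r-1)`-independent set by a new element is dependent. -/
lemma bad_unique {E : Finset α} {r : ℕ} {B : Finset (Finset α)}
    (hSP : IsSparsePaving E r B) {X : Finset α} (hX : X ∈ B) {f : α} (hfX : f ∈ X)
    {g₁ g₂ : α} (hg₁ : g₁ ∈ E) (hg₂ : g₂ ∈ E) (hg₁X : g₁ ∉ X) (hg₂X : g₂ ∉ X)
    (hne : g₁ ≠ g₂) (hb₁ : insert g₁ (X.erase f) ∉ B) (hb₂ : insert g₂ (X.erase f) ∉ B) :
    False := by
  obtain ⟨⟨hMB, hPav⟩, hsparse⟩ := hSP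
  have hXE := (hMB.2.1 X hX).1
  have hXr := (hMB.2.1 X hX).2
  have hr1 : 1 ≤ r := by
    rw [← hXr]; exact Finset.card_pos.2 ⟨f, hfX⟩
  have hDcard : (X.erase f).card = r - 1 := by
    rw [Finset.card_erase_of_mem hfX, hXr]
  have hgD : ∀ g, g ∉ X → g ∉ X.erase f := fun g hg h => hg (Finset.mem_of_mem_erase h)
  have hScard : ∀ g, g ∉ X → (insert g (X.erase f)).card = r := by
    intro g hg
    rw [Finset.card_insert_of_notMem (hgD g hg), hDcard]; omega
  have hSE : ∀ g ∈ E, insert g (X.erase f) ⊆ E := by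
    intro g hg
    exact Finset.insert_subset hg ((Finset.erase_subset f X).trans hXE)
  have hC₁ : Circuit E B (insert g₁ (X.erase f)) :=
    dep_circuit ⟨hMB, hPav⟩ (hSE g₁ hg₁) (hScard g₁ hg₁X) hb₁
  have hC₂ : Circuit E B (insert g₂ (X.erase f)) :=
    dep_circuit ⟨hMB, hPav⟩ (hSE g₂ hg₂) (hScard g₂ hg₂X) hb₂
  have hd₁ : insert g₁ (X.erase f) \ insert g₂ (X.erase f) = {g₁} := by
    ext x
    simp only [Finset.mem_sdiff, Finset.mem_insert, Finset.mem_singleton]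
    constructor
    · rintro ⟨hx1, hx2⟩
      rcases hx1 with rfl | hx1
      · rfl
      · exact absurd (Or.inr hx1) hx2
    · rintro rfl
      exact ⟨Or.inl rfl, fun h => h.elim (fun h' => hne h') (fun h' => hgD _ hg₁X h')⟩
  have hd₂ : insert g₂ (X.erase f) \ insert g₁ (X.erase f) = {g₂} := by
    ext x
    simp only [Finset.mem_sdiff, Finset.mem_insert, Finset.mem_singleton]
    constructor
    · rintro ⟨hx1, hx2⟩
      rcases hx1 with rfl | hx1
      · rfl
      · exact absurd (Or.inr hx1) hx2
    · rintro rfl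
      exact ⟨Or.inl rfl, fun h => h.elim (fun h' => hne h'.symm) (fun h' => hgD _ hg₂X h')⟩
  have hSne : insert g₁ (X.erase f) ≠ insert g₂ (X.erase f) := by
    intro h
    have : g₁ ∈ insert g₂ (X.erase f) := h ▸ Finset.mem_insert_self g₁ _
    rcases Finset.mem_insert.1 this with rfl | h'
    · exact hne rfl
    · exact hgD g₁ hg₁X h'
  have hsd : (insert g₁ (X.erase f) ∆ insert g₂ (X.erase f)).card = 2 := by
    rw [symmDiff_def, Finset.sup_eq_union, hd₁, hd₂]
    rw [Finset.card_union_of_disjoint (by simp [hne, hne.symm]), Finset.card_singleton,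
      Finset.card_singleton]
  have := hsparse _ _ hC₁ hC₂ (hScard g₁ hg₁X) (hScard g₂ hg₂X) hSne
  omega

/-- In a sparse paving matroid of rank `r` on a ground set of size `m`, for distinct
`e, f ∈ E`: `(m - r - 1)·|B_{ef}| ≤ (r - 1)·|B_{e¬f}|`. -/
theorem stmt4 (E : Finset α) (r m : ℕ) (B : Finset (Finset α))
    (hM : IsSparsePaving E r B) (hm : E.card = m)
    (e f : α) (he : e ∈ E) (hf : f ∈ E) (hef : e ≠ f) :
    (m - r - 1) * (B.filter (fun X => e ∈ X ∧ f ∈ X)).card ≤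
      (r - 1) * (B.filter (fun X => e ∈ X ∧ f ∉ X)).card := by
  classical
  obtain ⟨⟨hMB, hPav⟩, hsparse⟩ := hM
  set Bef := B.filter (fun X => e ∈ X ∧ f ∈ X) with hBef
  set Benf := B.filter (fun X => e ∈ X ∧ f ∉ X) with hBenf
  set adj : Finset α → Finset α → Prop := fun X Y => (X \ Y).card = 1 ∧ (Y \ X).card = 1
    with hadj
  -- Lower bound: each X in Bef has at least m - r - 1 neighbors
  have key1 : ∀ X ∈ Bef, m - r - 1 ≤ (Benf.filter (fun Y => adj X Y)).card := by
    intro X hX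
    rw [hBef, Finset.mem_filter] at hX
    obtain ⟨hXB, heX, hfX⟩ := hX
    have hXE := (hMB.2.1 X hXB).1
    have hXr := (hMB.2.1 X hXB).2
    set G := (E \ X).filter (fun g => insert g (X.erase f) ∈ B) with hG
    have hGcard : m - r - 1 ≤ G.card := by
      set Bad := (E \ X).filter (fun g => insert g (X.erase f) ∉ B) with hBad
      have hBadcard : Bad.card ≤ 1 := by
        by_contra h
        obtain ⟨g₁, hg₁, g₂, hg₂, hne⟩ := Finset.one_lt_card.1 (show 1 < Bad.card by omega)
        rw [hBad, Finset.mem_filter, Finset.mem_sdiff] at hg₁ hg₂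
        exact bad_unique ⟨⟨hMB, hPav⟩, hsparse⟩ hXB hfX hg₁.1.1 hg₂.1.1 hg₁.1.2 hg₂.1.2
          hne hg₁.2 hg₂.2
      have hsplit : G.card + Bad.card = (E \ X).card := by
        rw [hG, hBad]
        exact Finset.card_filter_add_card_filter_not _
      have hEX : (E \ X).card = m - r := by
        rw [Finset.card_sdiff_of_subset hXE, hm, hXr]
      omega
    refine le_trans hGcard (Finset.card_le_card_of_injOn
      (fun g => insert g (X.erase f)) ?_ ?_)
    · intro g hg
      rw [Finset.mem_coe, hG, Finset.mem_filter, Finset.mem_sdiff] at hg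
      obtain ⟨⟨hgE, hgX⟩, hgB⟩ := hg
      have hgD : g ∉ X.erase f := fun h => hgX (Finset.mem_of_mem_erase h)
      rw [Finset.mem_coe, Finset.mem_filter]
      refine ⟨?_, ?_, ?_⟩
      · rw [hBenf, Finset.mem_filter]
        refine ⟨hgB, Finset.mem_insert.2 (Or.inr (Finset.mem_erase.2 ⟨hef, heX⟩)), ?_⟩
        intro h
        rcases Finset.mem_insert.1 h with rfl | h'
        · exact hgX hfX
        · exact (Finset.mem_erase.1 h').1 rfl
      · -- (X \ Y).card = 1
        have : X \ insert g (X.erase f) = {f} := by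
          ext x
          simp only [Finset.mem_sdiff, Finset.mem_insert, Finset.mem_erase,
            Finset.mem_singleton, not_or]
          constructor
          · rintro ⟨hx, hx2, hx3⟩
            by_contra hxf
            exact hx3 ⟨hxf, hx⟩
          · rintro rfl
            exact ⟨hfX, fun h => hgX (h ▸ hfX), fun h => h.1 rfl⟩
        rw [this, Finset.card_singleton]
      · have : insert g (X.erase f) \ X = {g} := by
          ext x
          simp only [Finset.mem_sdiff, Finset.mem_insert, Finset.mem_erase,
            Finset.mem_singleton]
          constructor
          · rintro ⟨rfl | ⟨_, hx⟩, hx2⟩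
            · rfl
            · exact absurd hx hx2
          · rintro rfl
            exact ⟨Or.inl rfl, hgX⟩
        rw [this, Finset.card_singleton]
    · intro g₁ hg₁ g₂ hg₂ h
      have heq : insert g₁ (X.erase f) = insert g₂ (X.erase f) := h
      have : g₁ ∈ insert g₂ (X.erase f) := heq ▸ Finset.mem_insert_self g₁ _
      rcases Finset.mem_insert.1 this with rfl | h'
      · rfl
      · rw [Finset.mem_coe, hG, Finset.mem_filter, Finset.mem_sdiff] at hg₁
        exact absurd (Finset.mem_of_mem_erase h') hg₁.1.2
  -- Upper bound: each Y in Benf has at most r - 1 neighbors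
  have key2 : ∀ Y ∈ Benf, (Bef.filter (fun X => adj X Y)).card ≤ r - 1 := by
    intro Y hY
    rw [hBenf, Finset.mem_filter] at hY
    obtain ⟨hYB, heY, hfY⟩ := hY
    have hYr := (hMB.2.1 Y hYB).2
    have hYer : (Y.erase e).card = r - 1 := by
      rw [Finset.card_erase_of_mem heY, hYr]
    rw [← hYer]
    refine Finset.card_le_card_of_injOn
      (fun X => if h : (Y \ X).Nonempty then h.choose else e) ?_ ?_
    · intro X hX
      rw [Finset.mem_coe, Finset.mem_filter] at hX
      obtain ⟨hXBef, hadj1, hadj2⟩ := hX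
      rw [hBef, Finset.mem_filter] at hXBef
      have hne : (Y \ X).Nonempty := Finset.card_pos.1 (by omega)
      simp only [dif_pos hne]
      have hmem := hne.choose_spec
      rw [Finset.mem_sdiff] at hmem
      exact Finset.mem_erase.2 ⟨fun h => hmem.2 (h ▸ hXBef.2.1), hmem.1⟩
    · intro X₁ hX₁ X₂ hX₂ h
      rw [Finset.mem_coe, Finset.mem_filter] at hX₁ hX₂
      obtain ⟨hX₁Bef, hA1, hA2⟩ := hX₁
      obtain ⟨hX₂Bef, hB1, hB2⟩ := hX₂
      rw [hBef, Finset.mem_filter] at hX₁Bef hX₂Bef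
      have hne₁ : (Y \ X₁).Nonempty := Finset.card_pos.1 (by omega)
      have hne₂ : (Y \ X₂).Nonempty := Finset.card_pos.1 (by omega)
      simp only [dif_pos hne₁, dif_pos hne₂] at h
      set g := hne₁.choose with hgdef
      have hg₁ : g ∈ Y \ X₁ := hne₁.choose_spec
      have hg₂ : hne₂.choose ∈ Y \ X₂ := hne₂.choose_spec
      rw [← h] at hg₂
      have hYX₁ : Y \ X₁ = {g} := by
        obtain ⟨a, ha⟩ := Finset.card_eq_one.1 hA2
        rw [ha] at hg₁ ⊢
        rw [Finset.mem_singleton] at hg₁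
        rw [hg₁]
      have hYX₂ : Y \ X₂ = {g} := by
        obtain ⟨a, ha⟩ := Finset.card_eq_one.1 hB2
        rw [ha] at hg₂ ⊢
        rw [Finset.mem_singleton] at hg₂
        rw [hg₂]
      have hX₁Y : X₁ \ Y = {f} := by
        obtain ⟨a, ha⟩ := Finset.card_eq_one.1 hA1
        have : f ∈ X₁ \ Y := Finset.mem_sdiff.2 ⟨hX₁Bef.2.2, hfY⟩
        rw [ha] at this ⊢
        rw [Finset.mem_singleton] at this
        rw [← this]
      have hX₂Y : X₂ \ Y = {f} := by
        obtain ⟨a, ha⟩ := Finset.card_eq_one.1 hB1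
        have : f ∈ X₂ \ Y := Finset.mem_sdiff.2 ⟨hX₂Bef.2.2, hfY⟩
        rw [ha] at this ⊢
        rw [Finset.mem_singleton] at this
        rw [← this]
      have hX₁eq : X₁ = insert f (Y.erase g) := by
        ext x
        simp only [Finset.mem_insert, Finset.mem_erase]
        constructor
        · intro hx
          by_cases hxY : x ∈ Y
          · refine Or.inr ⟨fun hxg => ?_, hxY⟩
            subst hxg
            exact (Finset.mem_sdiff.1 (hYX₁ ▸ Finset.mem_singleton_self g : g ∈ Y \ X₁)).2 hx
          · have : x ∈ X₁ \ Y := Finset.mem_sdiff.2 ⟨hx, hxY⟩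
            rw [hX₁Y, Finset.mem_singleton] at this
            exact Or.inl this
        · rintro (rfl | ⟨hxg, hxY⟩)
          · exact hX₁Bef.2.2
          · by_contra hx
            have : x ∈ Y \ X₁ := Finset.mem_sdiff.2 ⟨hxY, hx⟩
            rw [hYX₁, Finset.mem_singleton] at this
            exact hxg this
      have hX₂eq : X₂ = insert f (Y.erase g) := by
        ext x
        simp only [Finset.mem_insert, Finset.mem_erase]
        constructor
        · intro hx
          by_cases hxY : x ∈ Y
          · refine Or.inr ⟨fun hxg => ?_, hxY⟩
            subst hxg
            exact (Finset.mem_sdiff.1 (hYX₂ ▸ Finset.mem_singleton_self g : g ∈ Y \ X₂)).2 hx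
          · have : x ∈ X₂ \ Y := Finset.mem_sdiff.2 ⟨hx, hxY⟩
            rw [hX₂Y, Finset.mem_singleton] at this
            exact Or.inl this
        · rintro (rfl | ⟨hxg, hxY⟩)
          · exact hX₂Bef.2.2
          · by_contra hx
            have : x ∈ Y \ X₂ := Finset.mem_sdiff.2 ⟨hxY, hx⟩
            rw [hYX₂, Finset.mem_singleton] at this
            exact hxg this
      rw [hX₁eq, hX₂eq]
  -- Double counting
  calc (m - r - 1) * Bef.card = ∑ _X ∈ Bef, (m - r - 1) := by
        rw [Finset.sum_const, smul_eq_mul, mul_comm]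
    _ ≤ ∑ X ∈ Bef, (Benf.filter (fun Y => adj X Y)).card := Finset.sum_le_sum key1
    _ = ∑ X ∈ Bef, ∑ Y ∈ Benf, (if adj X Y then 1 else 0) := by
        refine Finset.sum_congr rfl fun X _ => ?_
        rw [Finset.card_filter]
    _ = ∑ Y ∈ Benf, ∑ X ∈ Bef, (if adj X Y then 1 else 0) := Finset.sum_comm
    _ = ∑ Y ∈ Benf, (Bef.filter (fun X => adj X Y)).card := by
        refine Finset.sum_congr rfl fun Y _ => ?_
        rw [Finset.card_filter]
    _ ≤ ∑ _Y ∈ Benf, (r - 1) := Finset.sum_le_sum key2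
    _ = (r - 1) * Benf.card := by rw [Finset.sum_const, smul_eq_mul, mul_comm]
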